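/- arXiv:1601.06056 — 2 statements merged into one kernel-verified Lean document; each statement's English description precedes it below -/
import Mathlib

section
/- Let π(u,v) = (α u^l v^m, φ(u^l v^m) + β u^n v^p) with lp − mn ≠ 0, l ≤ n, m ≤ p positive integers, α, β ∈ {±1}, and φ(t) = t·h(t^{1/e}) with h analytic. Then the Jacobian determinant of π equals u^{l+n−1} v^{m+p−1} times a unit in the ring of Puiseux-analytic germs at the corner point (0,0). -/
open Filter Set

lemma det_two_aux (L : (ℝ × ℝ) →ₗ[ℝ] (ℝ × ℝ)) :
    LinearMap.det L = (L (1, 0)).1 * (L (0, 1)).2 - (L (0, 1)).1 * (L (1, 0)).2 := by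
  rw [← LinearMap.det_toMatrix (Module.Basis.finTwoProd ℝ), Matrix.det_fin_two]
  simp [LinearMap.toMatrix_apply, Module.Basis.coe_finTwoProd_repr, Module.Basis.finTwoProd_zero,
    Module.Basis.finTwoProd_one]

/-- for the corner normal form `π(u,v) = (α u^l v^m, φ(u^l v^m) + β u^n v^p)`
with `lp − mn ≠ 0`, the Jacobian determinant equals `u^{l+n−1} v^{m+p−1}` times a unit
(a Puiseux-analytic germ not vanishing at the corner point `(0,0)`). -/
theorem jacobian_ideal_corner_point
    (l m n p : ℕ) (hl : 0 < l) (hm : 0 < m) (hln : l ≤ n) (hmp : m ≤ p)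
    (hindep : (l : ℤ) * p - (m : ℤ) * n ≠ 0)
    (α β : ℝ) (hα : α = 1 ∨ α = -1) (hβ : β = 1 ∨ β = -1)
    (φ h : ℝ → ℝ) (e : ℕ) (he : 0 < e) (hh : ∀ t : ℝ, AnalyticAt ℝ h t)
    (hφ : ∀ t : ℝ, 0 ≤ t → φ t = t * h (t ^ ((e : ℝ)⁻¹)))
    (P : ℝ × ℝ → ℝ × ℝ)
    (hP : ∀ q : ℝ × ℝ, P q = (α * q.1 ^ l * q.2 ^ m, φ (q.1 ^ l * q.2 ^ m) + β * q.1 ^ n * q.2 ^ p)) :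
    ∃ U : ℝ × ℝ → ℝ,
      ContinuousWithinAt U {q : ℝ × ℝ | 0 ≤ q.1 ∧ 0 ≤ q.2} (0, 0) ∧ U (0, 0) ≠ 0 ∧
      ∀ᶠ q in nhdsWithin ((0 : ℝ), (0 : ℝ)) {q : ℝ × ℝ | 0 < q.1 ∧ 0 < q.2},
        LinearMap.det ((fderiv ℝ P q) : (ℝ × ℝ) →ₗ[ℝ] (ℝ × ℝ))
          = q.1 ^ (l + n - 1) * q.2 ^ (m + p - 1) * U q := by
  classical
  set c0 : ℝ := α * β * ((l : ℝ) * (p : ℝ) - (m : ℝ) * (n : ℝ)) with hc0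
  have hαne : α ≠ 0 := by rcases hα with h' | h' <;> simp [h']
  have hβne : β ≠ 0 := by rcases hβ with h' | h' <;> simp [h']
  have hlp : ((l : ℝ) * (p : ℝ) - (m : ℝ) * (n : ℝ)) ≠ 0 := by
    have : (((l : ℤ) * p - (m : ℤ) * n : ℤ) : ℝ) ≠ 0 := by exact_mod_cast hindep
    push_cast at this
    exact this
  refine ⟨fun _ => c0, continuousWithinAt_const, by
    simpa [hc0] using mul_ne_zero (mul_ne_zero hαne hβne) hlp, ?_⟩
  -- the open quadrant
  have hSopen : IsOpen {q : ℝ × ℝ | 0 < q.1 ∧ 0 < q.2} :=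
    (isOpen_lt continuous_const continuous_fst).inter
      (isOpen_lt continuous_const continuous_snd)
  filter_upwards [self_mem_nhdsWithin] with q hq
  obtain ⟨hu, hv⟩ := hq
  -- the analytic model for φ on positive arguments
  set g : ℝ → ℝ := fun w => w * h (w ^ ((e : ℝ)⁻¹)) with hgdef
  set w : ℝ := q.1 ^ l * q.2 ^ m with hwdef
  have hw : 0 < w := by positivity
  have hgdiff : DifferentiableAt ℝ g w := by
    refine differentiableAt_fun_id.mul ?_
    exact ((hh _).differentiableAt).comp w
      (Real.differentiableAt_rpow_const_of_ne _ hw.ne')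
  set c' : ℝ := deriv g w with hc'
  have hgd : HasDerivAt g c' w := hgdiff.hasDerivAt
  -- derivatives of the monomials
  have hfu : HasFDerivAt (fun q : ℝ × ℝ => q.1 ^ l)
      (((l : ℝ) * q.1 ^ (l - 1)) • ContinuousLinearMap.fst ℝ ℝ ℝ) q :=
    (hasDerivAt_pow l q.1).comp_hasFDerivAt q hasFDerivAt_fst
  have hfv : HasFDerivAt (fun q : ℝ × ℝ => q.2 ^ m)
      (((m : ℝ) * q.2 ^ (m - 1)) • ContinuousLinearMap.snd ℝ ℝ ℝ) q :=
    (hasDerivAt_pow m q.2).comp_hasFDerivAt q hasFDerivAt_snd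
  have hfu2 : HasFDerivAt (fun q : ℝ × ℝ => q.1 ^ n)
      (((n : ℝ) * q.1 ^ (n - 1)) • ContinuousLinearMap.fst ℝ ℝ ℝ) q :=
    (hasDerivAt_pow n q.1).comp_hasFDerivAt q hasFDerivAt_fst
  have hfv2 : HasFDerivAt (fun q : ℝ × ℝ => q.2 ^ p)
      (((p : ℝ) * q.2 ^ (p - 1)) • ContinuousLinearMap.snd ℝ ℝ ℝ) q :=
    (hasDerivAt_pow p q.2).comp_hasFDerivAt q hasFDerivAt_snd
  set Df : (ℝ × ℝ) →L[ℝ] ℝ :=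
    q.1 ^ l • (((m : ℝ) * q.2 ^ (m - 1)) • ContinuousLinearMap.snd ℝ ℝ ℝ)
      + q.2 ^ m • (((l : ℝ) * q.1 ^ (l - 1)) • ContinuousLinearMap.fst ℝ ℝ ℝ) with hDf
  set Df2 : (ℝ × ℝ) →L[ℝ] ℝ :=
    q.1 ^ n • (((p : ℝ) * q.2 ^ (p - 1)) • ContinuousLinearMap.snd ℝ ℝ ℝ)
      + q.2 ^ p • (((n : ℝ) * q.1 ^ (n - 1)) • ContinuousLinearMap.fst ℝ ℝ ℝ) with hDf2
  have hmul : HasFDerivAt (fun q : ℝ × ℝ => q.1 ^ l * q.2 ^ m) Df q := hfu.mul hfv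
  have hmul2 : HasFDerivAt (fun q : ℝ × ℝ => q.1 ^ n * q.2 ^ p) Df2 q := hfu2.mul hfv2
  -- first component
  have h1 : HasFDerivAt (fun q : ℝ × ℝ => α * (q.1 ^ l * q.2 ^ m)) (α • Df) q :=
    hmul.const_mul α
  -- second component
  have h2a : HasFDerivAt (fun q : ℝ × ℝ => g (q.1 ^ l * q.2 ^ m)) (c' • Df) q :=
    by have := hgd.comp_hasFDerivAt q hmul; exact this
  have h2b : HasFDerivAt (fun q : ℝ × ℝ => β * (q.1 ^ n * q.2 ^ p)) (β • Df2) q :=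
    hmul2.const_mul β
  have h2 : HasFDerivAt
      (fun q : ℝ × ℝ => g (q.1 ^ l * q.2 ^ m) + β * (q.1 ^ n * q.2 ^ p))
      (c' • Df + β • Df2) q := h2a.add h2b
  set L : (ℝ × ℝ) →L[ℝ] (ℝ × ℝ) := (α • Df).prod (c' • Df + β • Df2) with hLdef
  have hPg : HasFDerivAt
      (fun q : ℝ × ℝ =>
        (α * (q.1 ^ l * q.2 ^ m), g (q.1 ^ l * q.2 ^ m) + β * (q.1 ^ n * q.2 ^ p)))
      L q := h1.prodMk h2
  have hPeq : P =ᶠ[nhds q]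
      (fun q : ℝ × ℝ =>
        (α * (q.1 ^ l * q.2 ^ m), g (q.1 ^ l * q.2 ^ m) + β * (q.1 ^ n * q.2 ^ p))) := by
    filter_upwards [hSopen.mem_nhds ⟨hu, hv⟩] with q' hq'
    obtain ⟨hu', hv'⟩ := hq'
    have hw' : (0 : ℝ) ≤ q'.1 ^ l * q'.2 ^ m := by positivity
    rw [hP q', hφ _ hw']
    simp [hgdef, mul_assoc]
  have hPd : HasFDerivAt P L q := hPg.congr_of_eventuallyEq hPeq
  rw [hPd.fderiv, det_two_aux]
  have happ : ∀ x : ℝ × ℝ, ((L : (ℝ × ℝ) →ₗ[ℝ] (ℝ × ℝ)) x) = L x := fun _ => rfl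
  rw [happ, happ]
  simp only [hLdef, hDf, hDf2, ContinuousLinearMap.prod_apply, ContinuousLinearMap.add_apply,
    ContinuousLinearMap.coe_smul', Pi.smul_apply, ContinuousLinearMap.coe_fst',
    ContinuousLinearMap.coe_snd', smul_eq_mul, mul_one, mul_zero, add_zero, zero_add]
  have e1 : q.1 ^ (l - 1) * q.1 ^ n = q.1 ^ (l + n - 1) := by
    rw [← pow_add]; congr 1; omega
  have e2 : q.2 ^ m * q.2 ^ (p - 1) = q.2 ^ (m + p - 1) := by
    rw [← pow_add]; congr 1; omega
  have e3 : q.1 ^ l * q.1 ^ (n - 1) = q.1 ^ (l + n - 1) := by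
    rw [← pow_add]; congr 1; omega
  have e4 : q.2 ^ (m - 1) * q.2 ^ p = q.2 ^ (m + p - 1) := by
    rw [← pow_add]; congr 1; omega
  calc (α * (q.2 ^ m * ((l : ℝ) * q.1 ^ (l - 1)))) *
        (c' * (q.1 ^ l * ((m : ℝ) * q.2 ^ (m - 1))) + β * (q.1 ^ n * ((p : ℝ) * q.2 ^ (p - 1))))
      - (α * (q.1 ^ l * ((m : ℝ) * q.2 ^ (m - 1)))) *
        (c' * (q.2 ^ m * ((l : ℝ) * q.1 ^ (l - 1))) + β * (q.2 ^ p * ((n : ℝ) * q.1 ^ (n - 1))))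
      = α * β * ((l : ℝ) * (p : ℝ) * ((q.1 ^ (l - 1) * q.1 ^ n) * (q.2 ^ m * q.2 ^ (p - 1)))
        - (m : ℝ) * (n : ℝ) * ((q.1 ^ l * q.1 ^ (n - 1)) * (q.2 ^ (m - 1) * q.2 ^ p))) := by
        ring
    _ = q.1 ^ (l + n - 1) * q.2 ^ (m + p - 1) * c0 := by
        rw [e1, e2, e3, e4, hc0]; ring
end

section
/- Let F : ℝⁿ × ℝ → ℝ be defined on the set U = {(x,y) : |y| ≤ |g(x)|} by F(x,y) = (f(x)/g(x))·y where g(x) ≠ 0, extended by 0 where g(x) = 0. If f and g are Lipschitz, vanish on the same set, and the ratio f/g is bounded (in absolute value, between positive constants m and M on {g ≠ 0}), then F is Lipschitz on U. -/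
open Filter Set

/-- if `f`, `g` are Lipschitz, vanish on the same set, and `m ≤ |f/g| ≤ M` on
`{g ≠ 0}` for positive constants `m, M`, then `F(x,y) = (f(x)/g(x))·y` (extended by `0` where
`g = 0`) is Lipschitz on `U = {(x,y) : |y| ≤ |g(x)|}`. -/
theorem contact_family_lipschitz
    {n : ℕ}
    (f g : (Fin n → ℝ) → ℝ)
    (Kf Kg : NNReal) (hf : LipschitzWith Kf f) (hg : LipschitzWith Kg g)
    (hzero : ∀ x, f x = 0 ↔ g x = 0)
    (m M : ℝ) (hm : 0 < m) (hmM : m ≤ M)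
    (hbound : ∀ x, g x ≠ 0 → m ≤ |f x / g x| ∧ |f x / g x| ≤ M)
    (F : (Fin n → ℝ) × ℝ → ℝ)
    (hF : ∀ p : (Fin n → ℝ) × ℝ, F p = if g p.1 = 0 then 0 else (f p.1 / g p.1) * p.2) :
    ∃ K : NNReal, LipschitzOnWith K F {p : (Fin n → ℝ) × ℝ | |p.2| ≤ |g p.1|} := by
  have hM0 : 0 < M := lt_of_lt_of_le hm hmM
  refine ⟨Kf + M.toNNReal * (Kg + 1), LipschitzOnWith.of_dist_le_mul ?_⟩
  rintro ⟨x, y⟩ hp ⟨x', y'⟩ hq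
  simp only [Set.mem_setOf_eq] at hp hq
  have hco : ((Kf + M.toNNReal * (Kg + 1) : NNReal) : ℝ) = Kf + M * (Kg + 1) := by
    push_cast [Real.coe_toNNReal M hM0.le]; ring
  rw [hco, hF, hF]
  set D := dist ((x, y) : (Fin n → ℝ) × ℝ) ((x', y') : (Fin n → ℝ) × ℝ) with hD
  have hD0 : 0 ≤ D := dist_nonneg
  have hdx : dist x x' ≤ D := by rw [hD, Prod.dist_eq]; exact le_max_left _ _
  have hdy : |y - y'| ≤ D := by
    rw [hD, Prod.dist_eq]; exact le_trans (le_of_eq (Real.dist_eq y y').symm) (le_max_right _ _)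
  have hgx : |g x - g x'| ≤ (Kg : ℝ) * D := by
    calc |g x - g x'| = dist (g x) (g x') := (Real.dist_eq _ _).symm
      _ ≤ (Kg : ℝ) * dist x x' := hg.dist_le_mul x x'
      _ ≤ (Kg : ℝ) * D := by gcongr
  have hfx : |f x - f x'| ≤ (Kf : ℝ) * D := by
    calc |f x - f x'| = dist (f x) (f x') := (Real.dist_eq _ _).symm
      _ ≤ (Kf : ℝ) * dist x x' := hf.dist_le_mul x x'
      _ ≤ (Kf : ℝ) * D := by gcongr
  have hKf0 : (0:ℝ) ≤ Kf := Kf.coe_nonneg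
  have hKg0 : (0:ℝ) ≤ Kg := Kg.coe_nonneg
  by_cases hx : g x = 0 <;> by_cases hx' : g x' = 0
  · rw [if_pos hx, if_pos hx', dist_self]
    exact mul_nonneg (by nlinarith) hD0
  · -- g x = 0, g x' ≠ 0
    have hy0 : y = 0 := by
      rw [hx, abs_zero] at hp; exact abs_nonpos_iff.mp hp
    have hb := hbound x' hx'
    have hy' : |y'| ≤ |g x'| := hq
    have hgx' : |g x'| ≤ (Kg : ℝ) * D := by
      calc |g x'| = |g x - g x'| := by rw [hx, zero_sub, abs_neg]
        _ ≤ (Kg : ℝ) * D := hgx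
    rw [if_pos hx, if_neg hx', Real.dist_eq, zero_sub, abs_neg, abs_mul]
    have h1 : |f x' / g x'| * |y'| ≤ M * ((Kg : ℝ) * D) := by
      apply mul_le_mul hb.2 (hy'.trans hgx') (abs_nonneg _) hM0.le
    nlinarith
  · -- g x ≠ 0, g x' = 0
    have hy0 : y' = 0 := by
      rw [hx', abs_zero] at hq; exact abs_nonpos_iff.mp hq
    have hb := hbound x hx
    have hgx2 : |g x| ≤ (Kg : ℝ) * D := by
      calc |g x| = |g x - g x'| := by rw [hx', sub_zero]
        _ ≤ (Kg : ℝ) * D := hgx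
    rw [if_neg hx, if_pos hx', Real.dist_eq, sub_zero, abs_mul]
    have h1 : |f x / g x| * |y| ≤ M * ((Kg : ℝ) * D) := by
      apply mul_le_mul hb.2 (hp.trans hgx2) (abs_nonneg _) hM0.le
    nlinarith
  · -- main case: both nonzero
    rw [if_neg hx, if_neg hx', Real.dist_eq]
    have hb' := hbound x' hx'
    set t := y / g x with ht
    have hyt : y = g x * t := by rw [ht]; field_simp
    have ht1 : |t| ≤ 1 := by
      rw [ht, abs_div, div_le_one (abs_pos.mpr hx)]; exact hp
    have key : f x / g x * y - f x' / g x' * y' =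
        ((f x - f x') + (f x' / g x') * (g x' - g x)) * t + (f x' / g x') * (y - y') := by
      rw [hyt]; field_simp; ring
    have hA : |(f x - f x') + (f x' / g x') * (g x' - g x)| ≤ (Kf : ℝ) * D + M * ((Kg : ℝ) * D) := by
      calc |(f x - f x') + (f x' / g x') * (g x' - g x)|
          ≤ |f x - f x'| + |f x' / g x'| * |g x' - g x| := by
            refine (abs_add_le _ _).trans ?_; rw [abs_mul]
        _ ≤ (Kf : ℝ) * D + M * ((Kg : ℝ) * D) := by
            refine add_le_add hfx ?_
            have : |g x' - g x| ≤ (Kg : ℝ) * D := by rw [abs_sub_comm]; exact hgx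
            exact mul_le_mul hb'.2 this (abs_nonneg _) hM0.le
    calc |f x / g x * y - f x' / g x' * y'|
        = |((f x - f x') + (f x' / g x') * (g x' - g x)) * t + (f x' / g x') * (y - y')| := by
          rw [key]
      _ ≤ |(f x - f x') + (f x' / g x') * (g x' - g x)| * |t| + |f x' / g x'| * |y - y'| := by
          refine (abs_add_le _ _).trans ?_; rw [abs_mul, abs_mul]
      _ ≤ ((Kf : ℝ) * D + M * ((Kg : ℝ) * D)) * 1 + M * D := by
          refine add_le_add (mul_le_mul hA ht1 (abs_nonneg _) (by positivity)) ?_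
          exact mul_le_mul hb'.2 hdy (abs_nonneg _) hM0.le
      _ = ((Kf : ℝ) + M * ((Kg : ℝ) + 1)) * D := by ring
end
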